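/- Let D be a countable direct sum of chains with infinitely many non-trivial components such that there is a uniform finite bound on the sizes of all components of D. Then D has exactly ℵ₀ siblings up to isomorphism. -/

import Mathlib

open Cardinal

/-- Two preorders are equimorphic (siblings) if each order-embeds into the other. -/
def Equimorphic (α : Type*) (β : Type*) [Preorder α] [Preorder β] : Prop :=
  Nonempty (α ↪o β) ∧ Nonempty (β ↪o α)

/-- The setoid identifying order-isomorphic equimorphic substructures. -/
def sibSetoid (α : Type*) [Preorder α] : Setoid {S : Set α // Equimorphic S α} :=
  ⟨fun S T => Nonempty ((S : Set α) ≃o (T : Set α)),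
    ⟨fun _ => ⟨OrderIso.refl _⟩, fun ⟨e⟩ => ⟨e.symm⟩, fun ⟨e⟩ ⟨f⟩ => ⟨e.trans f⟩⟩⟩

/-- The sibling number of a structure: the number of isomorphism classes of
substructures equimorphic to it (every sibling is isomorphic to such a substructure). -/
noncomputable def sibNumber (α : Type*) [Preorder α] : Cardinal :=
  #(Quotient (sibSetoid α))

section Toolkit

variable {ι : Type*}

lemma sig_le_fst {α : ι → Type*} [∀ i, Preorder (α i)] {a b : Σ i, α i} (h : a ≤ b) :
    a.1 = b.1 := (Sigma.le_def.mp h).1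

lemma sig_comparable {α : ι → Type*} [∀ i, LinearOrder (α i)] {a b : Σ i, α i}
    (h : a.1 = b.1) : a ≤ b ∨ b ≤ a := by
  obtain ⟨i, a⟩ := a
  obtain ⟨j, b⟩ := b
  obtain rfl : i = j := h
  rcases le_total a b with h | h
  · exact Or.inl (Sigma.mk_le_mk_iff.mpr h)
  · exact Or.inr (Sigma.mk_le_mk_iff.mpr h)

/-- Order-iso congruence for sigma types with the disjoint-sum order. -/
def OrderIso.sigmaCongr' {I J : Type*} {F : I → Type*} {G : J → Type*}
    [∀ i, Preorder (F i)] [∀ j, Preorder (G j)]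
    (e : I ≃ J) (f : ∀ i, F i ≃o G (e i)) : (Σ i, F i) ≃o (Σ j, G j) where
  toEquiv := Equiv.sigmaCongr e (fun i => (f i).toEquiv)
  map_rel_iff' := by
    rintro ⟨i, a⟩ ⟨i', a'⟩
    show (⟨e i, f i a⟩ : Σ j, G j) ≤ ⟨e i', f i' a'⟩ ↔ _
    constructor
    · intro h
      obtain rfl : i = i' := e.injective (sig_le_fst h)
      rw [Sigma.mk_le_mk_iff] at h
      exact Sigma.mk_le_mk_iff.mpr ((f i).le_iff_le.mp h)
    · intro h
      obtain rfl : i = i' := sig_le_fst h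
      rw [Sigma.mk_le_mk_iff] at h
      exact Sigma.mk_le_mk_iff.mpr ((f i).le_iff_le.mpr h)

/-- Dropping the empty summands of a sigma order. -/
def dropEmptyIso {F : ι → Type*} [∀ i, Preorder (F i)] :
    (Σ i : {i : ι // Nonempty (F i)}, F i.1) ≃o (Σ i, F i) where
  toFun x := ⟨x.1.1, x.2⟩
  invFun x := ⟨⟨x.1, ⟨x.2⟩⟩, x.2⟩
  left_inv := by rintro ⟨⟨i, hi⟩, a⟩; rfl
  right_inv := by rintro ⟨i, a⟩; rfl
  map_rel_iff' := by
    rintro ⟨⟨i, hi⟩, a⟩ ⟨⟨i', hi'⟩, a'⟩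
    show (⟨i, a⟩ : Σ i, F i) ≤ ⟨i', a'⟩ ↔ _
    constructor
    · intro h
      obtain rfl : i = i' := sig_le_fst h
      rw [Sigma.mk_le_mk_iff] at h
      exact Sigma.mk_le_mk_iff.mpr h
    · intro h
      have he := sig_le_fst h
      obtain rfl : i = i' := congrArg Subtype.val he
      rw [Sigma.mk_le_mk_iff] at h
      exact Sigma.mk_le_mk_iff.mpr h

/-- Associativity of sigma orders. -/
def sigmaAssocIso {A : Type*} {B : A → Type*} {F : ∀ a, B a → Type*}
    [∀ a b, Preorder (F a b)] :
    (Σ p : Σ a, B a, F p.1 p.2) ≃o Σ a, Σ b : B a, F a b where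
  toEquiv := Equiv.sigmaAssoc F
  map_rel_iff' := by
    rintro ⟨⟨a, b⟩, x⟩ ⟨⟨a', b'⟩, x'⟩
    show (⟨a, b, x⟩ : Σ a, Σ b : B a, F a b) ≤ ⟨a', b', x'⟩ ↔ _
    constructor
    · intro h
      obtain rfl : a = a' := sig_le_fst h
      rw [Sigma.mk_le_mk_iff] at h
      obtain rfl : b = b' := sig_le_fst h
      rw [Sigma.mk_le_mk_iff] at h
      exact Sigma.mk_le_mk_iff.mpr h
    · intro h
      have he := sig_le_fst h
      obtain rfl : a = a' := congrArg Sigma.fst he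
      obtain rfl : b = b' := sigma_mk_injective he
      rw [Sigma.mk_le_mk_iff] at h
      exact Sigma.mk_le_mk_iff.mpr (Sigma.mk_le_mk_iff.mpr h)

/-- A finite chain is order-isomorphic to a `Fin`. -/
noncomputable def finChainIso (α : Type*) [LinearOrder α] [Finite α] {n : ℕ}
    (h : Nat.card α = n) : α ≃o Fin n := by
  have := Fintype.ofFinite α
  exact (monoEquivOfFin α (by rwa [← Nat.card_eq_fintype_card])).symm

/-- A finite chain embeds in any bigger finite chain. -/
noncomputable def finChainEmb (α β : Type*) [LinearOrder α] [LinearOrder β]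
    [Finite α] [Finite β] (h : Nat.card α ≤ Nat.card β) : α ↪o β :=
  ((finChainIso α rfl).toOrderEmbedding.trans (Fin.castLEOrderEmb h)).trans
    (finChainIso β rfl).symm.toOrderEmbedding

end Toolkit

section Fibers

variable {I : Type} {C : I → Type} [∀ i, LinearOrder (C i)]

/-- The fiber of a subset of a sigma type at an index. -/
def fib (S : Set (Σ i, C i)) (i : I) : Set (C i) := {c | ⟨i, c⟩ ∈ S}

/-- The set of indices where the fiber of `S` has size `s + 1`. -/
def szSet (S : Set (Σ i, C i)) (s : ℕ) : Set I := {i | Nat.card ↥(fib S i) = s + 1}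

/-- A subset of a sigma order is the sigma of its fibers. -/
def fibIso (S : Set (Σ i, C i)) : ↥S ≃o Σ i, ↥(fib S i) where
  toFun x := ⟨x.1.1, ⟨x.1.2, x.2⟩⟩
  invFun p := ⟨⟨p.1, p.2.1⟩, p.2.2⟩
  left_inv := by rintro ⟨⟨i, c⟩, h⟩; rfl
  right_inv := by rintro ⟨i, c, h⟩; rfl
  map_rel_iff' := by
    rintro ⟨⟨i, c⟩, h⟩ ⟨⟨i', c'⟩, h'⟩
    show (⟨i, ⟨c, h⟩⟩ : Σ i, ↥(fib S i)) ≤ ⟨i', ⟨c', h'⟩⟩ ↔ _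
    rw [Subtype.mk_le_mk]
    constructor
    · intro hle
      obtain rfl : i = i' := sig_le_fst hle
      rw [Sigma.mk_le_mk_iff] at hle
      exact Sigma.mk_le_mk_iff.mpr (Subtype.coe_le_coe.mpr hle)
    · intro hle
      obtain rfl : i = i' := sig_le_fst hle
      rw [Sigma.mk_le_mk_iff] at hle
      exact Sigma.mk_le_mk_iff.mpr (Subtype.mk_le_mk.mpr hle)

variable [∀ i, Finite (C i)]

lemma fib_finite (S : Set (Σ i, C i)) (i : I) : Finite ↥(fib S i) :=
  Finite.Set.subset _ (Set.subset_univ _)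

/-- Reindexing equivalence: nonempty fibers are indexed by their sizes. -/
noncomputable def szEquiv (S : Set (Σ i, C i)) :
    (Σ s : ℕ, ↥(szSet S s)) ≃ {i : I // Nonempty ↥(fib S i)} where
  toFun p := ⟨p.2.1, by
    have h : Nat.card ↥(fib S p.2.1) = p.1 + 1 := p.2.2
    have := fib_finite S p.2.1
    exact (Nat.card_pos_iff.mp (by omega)).1⟩
  invFun i := ⟨Nat.card ↥(fib S i.1) - 1, ⟨i.1, by
    have := fib_finite S i.1
    have hpos : 0 < Nat.card ↥(fib S i.1) := Nat.card_pos_iff.mpr ⟨i.2, this⟩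
    show Nat.card ↥(fib S i.1) = _
    omega⟩⟩
  left_inv := by
    rintro ⟨s, i, hi⟩
    have h : Nat.card ↥(fib S i) = s + 1 := hi
    have hs : Nat.card ↥(fib S i) - 1 = s := by omega
    exact Sigma.subtype_ext hs rfl
  right_inv := by rintro ⟨i, hi⟩; rfl

/-- The normal form of a subset of a bounded sigma of chains. -/
noncomputable def normIso (S : Set (Σ i, C i)) :
    ↥S ≃o Σ s : ℕ, Σ i : ↥(szSet S s), Fin (s + 1) := by
  have hfib := fib_finite S
  refine (fibIso S).trans (dropEmptyIso.symm.trans ?_)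
  refine ((OrderIso.sigmaCongr' (szEquiv S)
    (fun p => OrderIso.refl ↥(fib S p.2.1))).symm.trans ?_)
  refine (sigmaAssocIso (A := ℕ) (B := fun s => ↥(szSet S s))
      (F := fun s i => ↥(fib S i.1))).trans ?_
  exact OrderIso.sigmaCongr' (Equiv.refl ℕ) (fun s =>
    OrderIso.sigmaCongr' (Equiv.refl ↥(szSet S s)) (fun i =>
      finChainIso ↥(fib S i.1) i.2))

/-- Subsets with the same fiber-size statistics are order isomorphic. -/
lemma iso_of_szSet_eq {S T : Set (Σ i, C i)}
    (h : ∀ s : ℕ, #↥(szSet S s) = #↥(szSet T s)) : Nonempty (↥S ≃o ↥T) := by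
  have e : ∀ s : ℕ, ↥(szSet S s) ≃ ↥(szSet T s) := fun s => (Cardinal.eq.mp (h s)).some
  exact ⟨(normIso S).trans ((OrderIso.sigmaCongr' (Equiv.refl ℕ) (fun s =>
    OrderIso.sigmaCongr' (e s) (fun i => OrderIso.refl (Fin (s + 1))))).trans (normIso T).symm)⟩

end Fibers

section Invariance

variable {I : Type} {C : I → Type} [∀ i, LinearOrder (C i)]

/-- An order iso of subsets of sigma orders preserves the fiber relation. -/
lemma iso_idx_eq {S T : Set (Σ i, C i)} (φ : ↥S ≃o ↥T) {x y : ↥S}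
    (h : (x : Σ i, C i).1 = (y : Σ i, C i).1) :
    ((φ x : ↥T) : Σ i, C i).1 = ((φ y : ↥T) : Σ i, C i).1 := by
  have hc : (x : Σ i, C i) ≤ y ∨ (y : Σ i, C i) ≤ x := sig_comparable h
  rcases hc with hc | hc
  · exact sig_le_fst (Subtype.coe_le_coe.mpr (φ.le_iff_le.mpr (Subtype.coe_le_coe.mp hc)))
  · exact (sig_le_fst (Subtype.coe_le_coe.mpr (φ.le_iff_le.mpr (Subtype.coe_le_coe.mp hc)))).symm

/-- The fiber at `i` is equinumerous to the set of elements of `S` with index `i`. -/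
lemma card_fib_eq_card_idx (S : Set (Σ i, C i)) (i : I) :
    Nat.card ↥(fib S i) = Nat.card {x : ↥S // (x : Σ i, C i).1 = i} := by
  refine Nat.card_congr (Equiv.ofBijective
    (fun c => ⟨⟨⟨i, c.1⟩, c.2⟩, rfl⟩) ⟨?_, ?_⟩)
  · rintro ⟨c, hc⟩ ⟨c', hc'⟩ h
    simp only [Subtype.mk.injEq, Sigma.mk.inj_iff, heq_eq_eq, true_and] at h
    exact Subtype.ext (eq_of_heq (Sigma.mk.inj_iff.mp (congrArg Subtype.val h)).2)
  · rintro ⟨⟨⟨i', c⟩, hS⟩, (h : i' = i)⟩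
    subst h
    exact ⟨⟨c, hS⟩, rfl⟩

lemma sz_le_of_iso {S T : Set (Σ i, C i)} (φ : ↥S ≃o ↥T) (s : ℕ) :
    #↥(szSet S s) ≤ #↥(szSet T s) := by
  have key : ∀ i : ↥(szSet S s), ∃ x : ↥S, (x : Σ i, C i).1 = i.1 := by
    rintro ⟨i, hi⟩
    have h : Nat.card ↥(fib S i) = s + 1 := hi
    have : Nonempty ↥(fib S i) := Nat.card_pos_iff.mp (by omega) |>.1
    obtain ⟨c, hc⟩ := this
    exact ⟨⟨⟨i, c⟩, hc⟩, rfl⟩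
  choose pt hpt using key
  have hmem : ∀ i : ↥(szSet S s), ((φ (pt i) : ↥T) : Σ i, C i).1 ∈ szSet T s := by
    intro i
    show Nat.card ↥(fib T ((φ (pt i) : ↥T) : Σ i, C i).1) = s + 1
    rw [card_fib_eq_card_idx]
    have : Nat.card {x : ↥S // (x : Σ i, C i).1 = i.1}
        = Nat.card {y : ↥T // (y : Σ i, C i).1 = ((φ (pt i) : ↥T) : Σ i, C i).1} := by
      refine Nat.card_congr (φ.toEquiv.subtypeEquiv fun x => ⟨fun hx => ?_, fun hx => ?_⟩)
      · exact iso_idx_eq φ (hx.trans (hpt i).symm)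
      · have := iso_idx_eq φ.symm hx
        simpa [hpt i] using this
    rw [← this, ← card_fib_eq_card_idx]
    exact i.2
  refine Cardinal.mk_le_of_injective (f := fun i => (⟨_, hmem i⟩ : ↥(szSet T s))) ?_
  intro i i' h
  have h2 : ((φ (pt i) : ↥T) : Σ i, C i).1 = ((φ (pt i') : ↥T) : Σ i, C i).1 :=
    congrArg Subtype.val h
  have h3 := iso_idx_eq φ.symm h2
  simp only [OrderIso.symm_apply_apply] at h3
  exact Subtype.ext ((hpt i).symm.trans (h3.trans (hpt i')))

lemma sz_eq_of_iso {S T : Set (Σ i, C i)} (φ : ↥S ≃o ↥T) (s : ℕ) :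
    #↥(szSet S s) = #↥(szSet T s) :=
  le_antisymm (sz_le_of_iso φ s) (sz_le_of_iso φ.symm s)

end Invariance

section Embed

variable {I : Type} {C : I → Type} [∀ i, LinearOrder (C i)]

/-- Glue fiberwise embeddings along an injective index map into an embedding into a subset. -/
noncomputable def sigmaEmbed (S : Set (Σ i, C i)) (θ : I → I) (hθ : Function.Injective θ)
    (g : ∀ i, C i ↪o ↥(fib S (θ i))) : (Σ i, C i) ↪o ↥S := by
  refine OrderEmbedding.ofMapLEIff
    (fun x => ⟨⟨θ x.1, (g x.1 x.2).1⟩, (g x.1 x.2).2⟩) ?_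
  rintro ⟨i, c⟩ ⟨i', c'⟩
  show ((⟨θ i, (g i c).1⟩ : Σ i, C i) ≤ ⟨θ i', (g i' c').1⟩) ↔ _
  constructor
  · intro h
    obtain rfl : i = i' := hθ (sig_le_fst h)
    rw [Sigma.mk_le_mk_iff] at h
    exact Sigma.mk_le_mk_iff.mpr ((g i).le_iff_le.mp (Subtype.coe_le_coe.mp h))
  · intro h
    obtain rfl : i = i' := sig_le_fst h
    rw [Sigma.mk_le_mk_iff] at h
    exact Sigma.mk_le_mk_iff.mpr (Subtype.coe_le_coe.mpr ((g i).le_iff_le.mpr h))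

end Embed

theorem sib_aleph0_of_bounded (I : Type) (C : I → Type)
    [∀ i, LinearOrder (C i)] [∀ i, Nonempty (C i)] [Countable I]
    (hnt : {i | Nontrivial (C i)}.Infinite)
    (hbd : ∃ M : ℕ, ∀ i, #(C i) < M) :
    sibNumber (Σ i, C i) = ℵ₀ := by
  obtain ⟨M, hM⟩ := hbd
  haveI hfin : ∀ i, Finite (C i) := fun i =>
    Cardinal.lt_aleph0_iff_finite.mp ((hM i).trans (Cardinal.nat_lt_aleph0 M))
  have hcardM : ∀ i, Nat.card (C i) < M := by
    intro i
    have h : (Nat.card (C i) : Cardinal) < M := by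
      rw [Nat.cast_card]; exact hM i
    exact_mod_cast h
  have hcard1 : ∀ i, 1 ≤ Nat.card (C i) := fun i => Finite.card_pos
  -- pigeonhole: find k ≥ 2 with infinitely many components of size k
  haveI hinf : Infinite ↥{i | Nontrivial (C i)} := hnt.to_subtype
  obtain ⟨k', hk'⟩ := Finite.exists_infinite_fiber
    (fun i : ↥{i | Nontrivial (C i)} => (⟨Nat.card (C i.1), hcardM i.1⟩ : Fin M))
  set k : ℕ := k'.1 with hkdef
  have hk2 : 2 ≤ k := by
    have : Nonempty ↥((fun i : ↥{i | Nontrivial (C i)} =>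
        (⟨Nat.card (C i.1), hcardM i.1⟩ : Fin M)) ⁻¹' {k'}) := hk'.nonempty
    obtain ⟨⟨x, hx⟩⟩ := this
    have hx' : Nat.card (C x.1) = k := by
      have := hx
      simp only [Set.mem_preimage, Set.mem_singleton_iff] at this
      exact congrArg Fin.val this
    have hnt' : Nontrivial (C x.1) := x.2
    have := Finite.one_lt_card_iff_nontrivial.mpr hnt'
    omega
  have hBinf : {i | Nat.card (C i) = k}.Infinite := by
    haveI : Infinite ↥((fun i : ↥{i | Nontrivial (C i)} =>
        (⟨Nat.card (C i.1), hcardM i.1⟩ : Fin M)) ⁻¹' {k'}) := hk'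
    refine Set.infinite_of_injective_forall_mem
      (f := fun x : ↥((fun i : ↥{i | Nontrivial (C i)} =>
        (⟨Nat.card (C i.1), hcardM i.1⟩ : Fin M)) ⁻¹' {k'}) => x.1.1) ?_ ?_
    · intro x y h
      exact Subtype.ext (Subtype.ext h)
    · intro x
      have := x.2
      simp only [Set.mem_preimage, Set.mem_singleton_iff] at this
      exact congrArg Fin.val this
  let bb : ℕ ↪ ↥{i | Nat.card (C i) = k} := hBinf.natEmbedding
  let b : ℕ → I := fun n => (bb n).1
  have hbinj : Function.Injective b := fun n n' h => bb.injective (Subtype.ext h)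
  have hbk : ∀ n, Nat.card (C (b n)) = k := fun n => (bb n).2
  let p : ∀ i, C i := fun i => Classical.arbitrary (C i)
  set R : Set I := {i | Nat.card (C i) = 1 ∨ Nat.card (C i) = k} with hRdef
  obtain ⟨r, hr⟩ := Countable.exists_injective_nat ↥R
  have hbR : ∀ n, b n ∈ R := fun n => Or.inr (hbk n)
  -- the family of siblings
  set Sm : ℕ → Set (Σ i, C i) := fun m =>
    {x | Nat.card (C x.1) ≠ 1 ∧ ∀ n, b n = x.1 → n < m → x.2 = p x.1} with hSmdef
  have fib_mem : ∀ m j (c : C j), c ∈ fib (Sm m) j ↔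
      (Nat.card (C j) ≠ 1 ∧ ∀ n, b n = j → n < m → c = p j) := fun m j c => Iff.rfl
  have fib_one : ∀ m j, Nat.card (C j) = 1 → fib (Sm m) j = ∅ := by
    intro m j h
    ext c
    simp only [fib_mem, Set.mem_empty_iff_false, iff_false, not_and]
    intro hc
    exact absurd h hc
  have fib_single : ∀ m n, n < m → fib (Sm m) (b n) = {p (b n)} := by
    intro m n hn
    ext c
    rw [fib_mem, Set.mem_singleton_iff]
    constructor
    · rintro ⟨-, h⟩
      exact h n rfl hn
    · rintro rfl
      exact ⟨by rw [hbk n]; omega, fun _ _ _ => rfl⟩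
  have fib_full : ∀ m j, Nat.card (C j) ≠ 1 → (∀ n, n < m → b n ≠ j) →
      fib (Sm m) j = Set.univ := by
    intro m j h1 h2
    ext c
    rw [fib_mem]
    simp only [Set.mem_univ, iff_true]
    exact ⟨h1, fun n hn hnm => absurd hn (h2 n hnm)⟩
  -- the invariant value
  have hsz0 : ∀ m, szSet (Sm m) 0 = b '' Set.Iio m := by
    intro m
    ext j
    simp only [szSet, Set.mem_setOf_eq, Set.mem_image, Set.mem_Iio]
    constructor
    · intro hj
      by_cases h1 : Nat.card (C j) = 1
      · rw [fib_one m j h1] at hj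
        simp at hj
      · by_cases h2 : ∃ n, n < m ∧ b n = j
        · obtain ⟨n, hn, he⟩ := h2
          exact ⟨n, hn, he⟩
        · push_neg at h2
          rw [fib_full m j h1 h2] at hj
          rw [Nat.card_univ] at hj
          omega
    · rintro ⟨n, hn, rfl⟩
      show Nat.card ↥(fib (Sm m) (b n)) = 0 + 1
      rw [fib_single m n hn]
      simp
  have hmk0 : ∀ m, #↥(szSet (Sm m) 0) = m := by
    intro m
    rw [hsz0 m, Cardinal.mk_image_eq hbinj]
    have h : (Set.Iio m : Set ℕ) = ↑(Finset.range m) := by ext; simp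
    rw [h]
    simp
  -- each member of the family is equimorphic to the whole order
  have hequi : ∀ m, Equimorphic ↥(Sm m) (Σ i, C i) := by
    intro m
    refine ⟨⟨OrderEmbedding.subtype _⟩, ⟨?_⟩⟩
    let θ : I → I := fun i => if h : i ∈ R then b (m + r ⟨i, h⟩) else i
    have hθR : ∀ i (h : i ∈ R), θ i = b (m + r ⟨i, h⟩) := fun i h => dif_pos h
    have hθn : ∀ i, i ∉ R → θ i = i := fun i h => dif_neg h
    have hθinj : Function.Injective θ := by
      intro i i' h
      by_cases hi : i ∈ R <;> by_cases hi' : i' ∈ R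
      · rw [hθR i hi, hθR i' hi'] at h
        have h1 : m + r ⟨i, hi⟩ = m + r ⟨i', hi'⟩ := hbinj h
        have h2 : (⟨i, hi⟩ : ↥R) = ⟨i', hi'⟩ := hr (by omega)
        exact congrArg Subtype.val h2
      · rw [hθR i hi, hθn i' hi'] at h
        exact absurd (show i' ∈ R by rw [← h]; exact hbR _) hi'
      · rw [hθn i hi, hθR i' hi'] at h
        exact absurd (show i ∈ R by rw [h]; exact hbR _) hi
      · rw [hθn i hi, hθn i' hi'] at h
        exact h
    have hg : ∀ i, Nonempty (C i ↪o ↥(fib (Sm m) (θ i))) := by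
      intro i
      by_cases h : i ∈ R
      · rw [hθR i h, fib_full m _ (by rw [hbk]; omega)
          (fun n hn he => by have := hbinj he; omega)]
        refine ⟨(finChainEmb (C i) (C (b (m + r ⟨i, h⟩))) ?_).trans
          (OrderIso.Set.univ).symm.toOrderEmbedding⟩
        rw [hbk]
        rcases h with h | h <;> omega
      · rw [hθn i h, fib_full m i (fun hc => h (Or.inl hc))
          (fun n hn he => h (he ▸ hbR n))]
        exact ⟨(OrderIso.Set.univ).symm.toOrderEmbedding⟩
    exact sigmaEmbed (Sm m) θ hθinj (fun i => (hg i).some)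
  -- lower bound
  have lower : ℵ₀ ≤ sibNumber (Σ i, C i) := by
    have hqinj : Function.Injective
        (fun m : ℕ => (⟦⟨Sm m, hequi m⟩⟧ : Quotient (sibSetoid (Σ i, C i)))) := by
      intro m m' h
      obtain ⟨φ⟩ := Quotient.exact h
      have h0 := sz_eq_of_iso φ 0
      rw [hmk0 m, hmk0 m'] at h0
      exact_mod_cast h0
    have := Cardinal.mk_le_of_injective hqinj
    rwa [Cardinal.mk_nat] at this
  -- upper bound
  have upper : sibNumber (Σ i, C i) ≤ ℵ₀ := by
    have hwd : ∀ (S T : {S : Set (Σ i, C i) // Equimorphic ↥S (Σ i, C i)}),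
        (sibSetoid (Σ i, C i)).r S T →
        (fun s : Fin M => Cardinal.toENat #↥(szSet S.1 s.1)) =
        (fun s : Fin M => Cardinal.toENat #↥(szSet T.1 s.1)) := by
      rintro S T ⟨φ⟩
      funext s
      rw [sz_eq_of_iso φ s.1]
    have hinj : Function.Injective (Quotient.lift _ hwd) := by
      intro q q'
      refine Quotient.inductionOn₂ q q' ?_
      intro S T h
      refine Quotient.sound ?_
      have hsz : ∀ s : ℕ, #↥(szSet S.1 s) = #↥(szSet T.1 s) := by
        intro s
        by_cases hs : s < M
        · have hc := congrFun h ⟨s, hs⟩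
          exact Cardinal.toENat_injOn Cardinal.mk_le_aleph0 Cardinal.mk_le_aleph0 hc
        · have hemp : ∀ (U : Set (Σ i, C i)), szSet U s = ∅ := by
            intro U
            ext i
            simp only [szSet, Set.mem_setOf_eq, Set.mem_empty_iff_false, iff_false]
            intro hc
            have h1 : Nat.card ↥(fib U i) ≤ Nat.card (C i) :=
              Nat.card_le_card_of_injective _ Subtype.coe_injective
            have := hcardM i
            omega
          rw [hemp S.1, hemp T.1]
      exact iso_of_szSet_eq hsz
    have h1 : sibNumber (Σ i, C i) ≤ #(Fin M → ℕ∞) := Cardinal.mk_le_of_injective hinj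
    exact h1.trans Cardinal.mk_le_aleph0
  exact le_antisymm upper lower
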